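/- arXiv:1412.2796 — 4 statements merged into one kernel-verified Lean document; each statement's English description precedes it below -/
import Mathlib

section
/- Let (x_n) and (y_n) be real sequences with x_0, x_1 given, such that y_n = O(n^{1-ε}) for some ε > 0, and x_n = y_n + (1/n) · Σ_{j=0}^{n-1} (x_j + x_{n-1-j}) for all n > 1. Then the limit of x_n/n as n → ∞ exists and is finite. -/
open Filter

theorem stmt_0 (x y : ℕ → ℝ)
    (hy : ∃ C > (0:ℝ), ∃ ε > (0:ℝ), ∀ n : ℕ, 1 ≤ n → |y n| ≤ C * (n : ℝ) ^ ((1:ℝ) - ε))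
    (hrec : ∀ n : ℕ, 2 ≤ n →
      x n = y n + (1 / (n : ℝ)) * ∑ j ∈ Finset.range n, (x j + x (n - 1 - j))) :
    ∃ L : ℝ, Tendsto (fun n : ℕ => x n / (n : ℝ)) atTop (nhds L) := by
  obtain ⟨C, hC, ε, hε, hyb⟩ := hy
  set S : ℕ → ℝ := fun n => ∑ j ∈ Finset.range n, x j with hSdef
  have hxn : ∀ n : ℕ, 2 ≤ n → x n = y n + 2 * S n / n := by
    intro n hn
    have h := hrec n hn
    rw [Finset.sum_add_distrib, Finset.sum_range_reflect] at h
    rw [h]; simp only [hSdef]; ring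
  set b : ℕ → ℝ := fun n => S n / (n * (n + 1)) with hbdef
  set g : ℕ → ℝ := fun k => y k / ((k + 1) * (k + 2)) with hgdef
  -- step recurrence for b
  have hstep : ∀ n : ℕ, 2 ≤ n → b (n + 1) = b n + g n := by
    intro n hn
    have hn0 : (0:ℝ) < (n : ℝ) := by exact_mod_cast Nat.lt_of_lt_of_le (by norm_num) hn
    have hS1 : S (n + 1) = S n + x n := Finset.sum_range_succ x n
    have hx := hxn n hn
    simp only [hbdef, hgdef, hS1, hx]
    push_cast
    field_simp
    ring
  -- b n = b 2 + partial sums of g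
  have hbsum : ∀ n : ℕ, 2 ≤ n → b n = b 2 + ∑ k ∈ Finset.Ico 2 n, g k := by
    intro n hn
    induction n, hn using Nat.le_induction with
    | base => simp
    | succ n hn ih =>
      rw [hstep n hn, ih, Finset.sum_Ico_succ_top hn]
      ring
  -- summability of g
  have hsumg : Summable g := by
    apply Summable.of_norm_bounded_eventually_nat (g := fun k => C * (k : ℝ) ^ (-(1 + ε)))
    · exact (Real.summable_nat_rpow.mpr (by linarith)).mul_left C
    · filter_upwards [eventually_ge_atTop 1] with k hk
      have hk1 : (1:ℝ) ≤ (k : ℝ) := by exact_mod_cast hk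
      have hk0 : (0:ℝ) < (k : ℝ) := by linarith
      have hden : (0:ℝ) < ((k : ℝ) + 1) * ((k : ℝ) + 2) := by positivity
      have h2 : (k : ℝ) ^ ((2:ℝ)) ≤ ((k : ℝ) + 1) * ((k : ℝ) + 2) := by
        rw [show ((2:ℝ)) = ((2:ℕ):ℝ) by norm_num, Real.rpow_natCast]
        nlinarith
      have hnum : |y k| ≤ C * (k : ℝ) ^ ((1:ℝ) - ε) := hyb k hk
      have hgk : ‖g k‖ = |y k| / (((k : ℝ) + 1) * ((k : ℝ) + 2)) := by
        simp only [hgdef, Real.norm_eq_abs, abs_div, abs_of_pos hden]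
      rw [hgk]
      have hchain : |y k| / (((k : ℝ) + 1) * ((k : ℝ) + 2)) ≤
          (C * (k : ℝ) ^ ((1:ℝ) - ε)) / ((k : ℝ) ^ ((2:ℝ))) := by
        apply div_le_div₀ (by positivity) hnum (by positivity) h2
      refine hchain.trans (le_of_eq ?_)
      rw [mul_div_assoc, ← Real.rpow_sub hk0]
      congr 1; ring
  -- limit of b
  obtain ⟨A, hA⟩ := hsumg
  have hIco : Tendsto (fun n => ∑ k ∈ Finset.Ico 2 n, g k) atTop
      (nhds (A - ∑ k ∈ Finset.range 2, g k)) := by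
    refine (hA.tendsto_sum_nat.sub_const (∑ k ∈ Finset.range 2, g k)).congr' ?_
    filter_upwards [eventually_ge_atTop 2] with n hn
    rw [Finset.sum_Ico_eq_sub _ hn]
  set B : ℝ := b 2 + (A - ∑ k ∈ Finset.range 2, g k) with hBdef
  have hbt : Tendsto b atTop (nhds B) := by
    refine (tendsto_const_nhds.add hIco).congr' ?_
    filter_upwards [eventually_ge_atTop 2] with n hn
    exact (hbsum n hn).symm
  -- y n / n → 0
  have hy0 : Tendsto (fun n : ℕ => y n / n) atTop (nhds 0) := by
    apply squeeze_zero_norm' (a := fun n : ℕ => C * (n : ℝ) ^ (-ε)) ?_ ?_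
    · filter_upwards [eventually_ge_atTop 1] with n hn
      have hn1 : (1:ℝ) ≤ (n : ℝ) := by exact_mod_cast hn
      have hn0 : (0:ℝ) < (n : ℝ) := by linarith
      have : ‖y n / n‖ = |y n| / (n : ℝ) := by
        rw [Real.norm_eq_abs, abs_div, abs_of_pos hn0]
      rw [this]
      have hchain : |y n| / (n : ℝ) ≤ (C * (n : ℝ) ^ ((1:ℝ) - ε)) / ((n : ℝ) ^ ((1:ℝ))) := by
        apply div_le_div₀ (by positivity) (hyb n hn) (by positivity)
        rw [Real.rpow_one]
      refine hchain.trans (le_of_eq ?_)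
      rw [mul_div_assoc, ← Real.rpow_sub hn0]
      congr 1; ring
    · have h1 : Tendsto (fun n : ℕ => (n : ℝ) ^ (-ε)) atTop (nhds 0) :=
        (tendsto_rpow_neg_atTop hε).comp tendsto_natCast_atTop_atTop
      simpa using h1.const_mul C
  -- (n+1)/n → 1
  have hrat : Tendsto (fun n : ℕ => ((n : ℝ) + 1) / n) atTop (nhds 1) := by
    have h : Tendsto (fun n : ℕ => 1 + 1 / (n : ℝ)) atTop (nhds (1 + 0)) :=
      tendsto_const_nhds.add tendsto_one_div_atTop_nhds_zero_nat
    rw [add_zero] at h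
    refine h.congr' ?_
    filter_upwards [eventually_ge_atTop 1] with n hn
    have hn0 : (0:ℝ) < (n : ℝ) := by exact_mod_cast hn
    field_simp
  refine ⟨0 + 2 * B * 1, ?_⟩
  have hfin : Tendsto (fun n : ℕ => y n / n + 2 * b n * (((n : ℝ) + 1) / n)) atTop
      (nhds (0 + 2 * B * 1)) := hy0.add ((hbt.const_mul 2).mul hrat)
  refine hfin.congr' ?_
  filter_upwards [eventually_ge_atTop 2] with n hn
  have hn0 : (0:ℝ) < (n : ℝ) := by exact_mod_cast Nat.lt_of_lt_of_le (by norm_num) hn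
  rw [hxn n hn]
  simp only [hbdef]
  field_simp
end

section
/- Suppose a sequence of nonnegative reals (E_{n,ℓ}) indexed by n, with fixed integer ℓ ≥ 1, satisfies E_{n,ℓ} = 0 for n < ℓ, and E_{n,ℓ} = 1 + (1/n)·Σ_{j=0}^{n-1}(E_{j,ℓ} + E_{n-1-j,ℓ}) for n ≥ ℓ. Then for all n ≥ ℓ, E_{n,ℓ}/(n+1) = 2/(ℓ+1) − 1/(n+1). -/
theorem stmt_7 (ℓ : ℕ) (hℓ : 1 ≤ ℓ) (a : ℕ → ℝ)
    (hnonneg : ∀ n, 0 ≤ a n)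
    (hzero : ∀ n : ℕ, n < ℓ → a n = 0)
    (hrec : ∀ n : ℕ, ℓ ≤ n →
      a n = 1 + (1 / (n : ℝ)) * ∑ j ∈ Finset.range n, (a j + a (n - 1 - j))) :
    ∀ n : ℕ, ℓ ≤ n → a n / ((n : ℝ) + 1) = 2 / ((ℓ : ℝ) + 1) - 1 / ((n : ℝ) + 1) := by
  have hℓpos : (0:ℝ) < (ℓ:ℝ) + 1 := by positivity
  -- recurrence in simplified form: a n = 1 + (2/n) * S n
  have hrec' : ∀ n : ℕ, ℓ ≤ n →
      a n = 1 + (1 / (n : ℝ)) * (2 * ∑ j ∈ Finset.range n, a j) := by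
    intro n hn
    have := hrec n hn
    rw [Finset.sum_add_distrib, Finset.sum_range_reflect (fun j => a j) n] at this
    rw [this]; ring
  -- sum formula
  have hsum : ∀ n : ℕ, ℓ ≤ n →
      ∑ j ∈ Finset.range n, a j = (n:ℝ) * ((n:ℝ)+1) / ((ℓ:ℝ)+1) - (n:ℝ) := by
    intro n hn
    induction n, hn using Nat.le_induction with
    | base =>
      have : ∑ j ∈ Finset.range ℓ, a j = 0 := by
        apply Finset.sum_eq_zero
        intro j hj
        exact hzero j (Finset.mem_range.mp hj)
      rw [this]
      field_simp
      ring
    | succ n hn ih =>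
      have hnpos : (0:ℝ) < (n:ℝ) := by
        have : 0 < n := lt_of_lt_of_le hℓ hn
        exact_mod_cast this
      have han : a n = 2 * ((n:ℝ)+1) / ((ℓ:ℝ)+1) - 1 := by
        rw [hrec' n hn, ih]
        field_simp
        ring
      rw [Finset.sum_range_succ, ih, han]
      push_cast
      field_simp
      ring
  intro n hn
  have hnpos : (0:ℝ) < (n:ℝ) := by
    have : 0 < n := lt_of_lt_of_le hℓ hn
    exact_mod_cast this
  have han : a n = 2 * ((n:ℝ)+1) / ((ℓ:ℝ)+1) - 1 := by
    rw [hrec' n hn, hsum n hn]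
    field_simp
    ring
  rw [han]
  have h1 : (0:ℝ) < (n:ℝ) + 1 := by positivity
  field_simp
end

section
/- Let P(u,v) be a polynomial in two variables with rational coefficients, and substitute u = 1−x, v = log(1/(1−x)). Then the antiderivative ∫ (1−x)^b·(log(1/(1−x)))^c dx (for nonnegative integers b, c) is again of this polynomial form, and when the rational coefficients of the result are written in lowest terms, none of their denominators has a prime divisor exceeding b+1. -/
lemma den_div_dvd' (a : ℤ) (n : ℕ) : (((a : ℚ) / (n : ℚ)).den : ℤ) ∣ (n : ℤ) := by
  have h : ((a:ℚ)/(n:ℚ)) = Rat.divInt a n := by rw [Rat.divInt_eq_div]; norm_cast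
  rw [h]; exact Rat.den_dvd a n

lemma prime_den_le (q : ℚ) (b : ℕ) (hq : ∃ a : ℤ, q = (a:ℚ)/(((b+1:ℕ)):ℚ)) (p : ℕ)
    (hp : p.Prime) (hd : p ∣ q.den) : p ≤ b + 1 := by
  obtain ⟨a, rfl⟩ := hq
  have h2 := den_div_dvd' a (b+1)
  have h3 : (p:ℤ) ∣ ((b+1:ℕ):ℤ) := dvd_trans (Int.natCast_dvd_natCast.mpr hd) h2
  exact Nat.le_of_dvd (Nat.succ_pos b) (Int.natCast_dvd_natCast.mp h3)

theorem stmt_17 (b c : ℕ) :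
    ∃ (m : ℕ) (a : Fin m → ℚ) (bs cs : Fin m → ℕ),
      (∀ x ∈ Set.Ioo (0:ℝ) 1,
        HasDerivAt
          (fun x : ℝ => ∑ i : Fin m,
            (a i : ℝ) * (1 - x) ^ (bs i) * (Real.log (1 / (1 - x))) ^ (cs i))
          ((1 - x) ^ b * (Real.log (1 / (1 - x))) ^ c) x) ∧
      (∀ i : Fin m, ∀ p : ℕ, p.Prime → p ∣ (a i).den → p ≤ b + 1) := by
  induction c with
  | zero =>
    refine ⟨1, fun _ => -1/((b:ℚ)+1), fun _ => b+1, fun _ => 0, ?_, ?_⟩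
    · intro x hx
      obtain ⟨hx0, hx1⟩ := hx
      have h1x : (1:ℝ) - x ≠ 0 := by linarith
      have hb1 : ((b:ℝ)+1) ≠ 0 := by positivity
      have h1 : HasDerivAt (fun x : ℝ => 1 - x) (-1) x := by
        simpa using (hasDerivAt_id x).const_sub 1
      have h2 := (h1.pow (b+1)).const_mul (((-1 : ℚ)/((b:ℚ)+1) : ℚ) : ℝ)
      simp only [Fin.sum_univ_one, pow_zero, mul_one]
      refine h2.congr_deriv ?_
      push_cast
      field_simp
    · intro i p hp hd
      exact prime_den_le _ b ⟨-1, by push_cast; ring⟩ p hp hd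
  | succ c ih =>
    obtain ⟨m, a, bs, cs, hder, hdenom⟩ := ih
    refine ⟨m+1, Fin.cons (-1/((b:ℚ)+1)) (fun i => ((c:ℚ)+1)/((b:ℚ)+1) * a i),
      Fin.cons (b+1) bs, Fin.cons (c+1) cs, ?_, ?_⟩
    · intro x hx
      obtain ⟨hx0, hx1⟩ := hx
      have h1x : (1:ℝ) - x ≠ 0 := by linarith
      have hb1 : ((b:ℝ)+1) ≠ 0 := by positivity
      have h1 : HasDerivAt (fun x : ℝ => 1 - x) (-1) x := by
        simpa using (hasDerivAt_id x).const_sub 1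
      have hL : HasDerivAt (fun x : ℝ => Real.log (1/(1-x))) (1/(1-x)) x := by
        have h2 : HasDerivAt (fun x : ℝ => Real.log (1 - x)) (-1/(1-x)) x := h1.log h1x
        have h3 : (fun x : ℝ => Real.log (1/(1-x))) = fun x : ℝ => -Real.log (1-x) := by
          funext y; rw [one_div, Real.log_inv]
        rw [h3]
        refine h2.neg.congr_deriv ?_
        field_simp
      have hpow := h1.pow (b+1)
      have hLpow := hL.pow (c+1)
      have hterm := ((hpow.mul hLpow).const_mul (((-1 : ℚ)/((b:ℚ)+1) : ℚ) : ℝ))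
      have htail := (hder x ⟨hx0, hx1⟩).const_mul ((((c:ℚ)+1)/((b:ℚ)+1) : ℚ) : ℝ)
      have hsum := hterm.add htail
      have heqfun : (fun x : ℝ => ∑ i : Fin (m+1),
          (((Fin.cons (-1/((b:ℚ)+1)) (fun i => ((c:ℚ)+1)/((b:ℚ)+1) * a i) : Fin (m+1) → ℚ) i : ℚ) : ℝ)
            * (1 - x) ^ (Fin.cons (b+1) bs i) * (Real.log (1 / (1 - x))) ^ (Fin.cons (c+1) cs i))
          = (fun x : ℝ =>
            ((((-1 : ℚ)/((b:ℚ)+1) : ℚ) : ℝ)) * ((1 - x) ^ (b+1) * (Real.log (1/(1-x))) ^ (c+1)) +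
            (((((c:ℚ)+1)/((b:ℚ)+1) : ℚ) : ℝ)) *
              ∑ i : Fin m, (a i : ℝ) * (1 - x) ^ (bs i) * (Real.log (1 / (1 - x))) ^ (cs i)) := by
        funext y
        simp only [Fin.sum_univ_succ, Fin.cons_zero, Fin.cons_succ, Rat.cast_mul]
        rw [Finset.mul_sum]
        congr 1
        · ring
        · exact Finset.sum_congr rfl (fun i _ => by ring)
      rw [heqfun]
      refine hsum.congr_deriv ?_
      simp only [Nat.add_sub_cancel, pow_succ, Pi.pow_apply, Pi.mul_apply]
      push_cast
      field_simp
      ring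
    · intro i p hp
      refine Fin.cases (fun hd => ?_) (fun j hd => ?_) i
      · simp only [Fin.cons_zero] at hd
        exact prime_den_le _ b ⟨-1, by push_cast; ring⟩ p hp hd
      · simp only [Fin.cons_succ] at hd
        have hdvd := Rat.mul_den_dvd (((c:ℚ)+1)/((b:ℚ)+1)) (a j)
        rcases (Nat.Prime.dvd_mul hp).mp (dvd_trans hd hdvd) with h | h
        · exact prime_den_le _ b ⟨(c:ℤ)+1, by push_cast; ring⟩ p hp h
        · exact hdenom j p hp h
end

section
/- Let α₀ ∈ (0,1) satisfy α₀ + α₀·log(2/α₀) = 1. For any γ ∈ (0, α₀], and any m ≥ 2, Σ_{μ ≤ γ·log m} (2^μ/(μ−1)!)·(log m + 1)^{μ−1}/m ≤ γ²·e^γ·(log m)·m^{g(γ)}, where g(γ) = γ + γ·log(2/γ) − 1 < 0 for γ < α₀; in particular the left side tends to 0 as m → ∞ when γ < α₀. -/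
open Filter

private lemma mono_aux (a b c : ℝ) (ha : 0 < a) (hab : a ≤ b) (hbc : b * Real.exp 1 ≤ c) :
    a * Real.log (c / a) ≤ b * Real.log (c / b) := by
  have hb : 0 < b := ha.trans_le hab
  have hc : 0 < c := lt_of_lt_of_le (by positivity) hbc
  have h1 : Real.log (c / a) = Real.log (c / b) + Real.log (b / a) := by
    rw [← Real.log_mul (by positivity) (by positivity)]
    congr 1; field_simp
  have h2 : Real.log (b / a) ≤ b / a - 1 := Real.log_le_sub_one_of_pos (by positivity)
  have h3 : (1:ℝ) ≤ Real.log (c / b) := by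
    rw [Real.le_log_iff_exp_le (by positivity)]
    rw [le_div_iff₀ hb]; linarith [mul_comm b (Real.exp 1)]
  have h4 : a * Real.log (b / a) ≤ b - a := by
    have := mul_le_mul_of_nonneg_left h2 ha.le
    calc a * Real.log (b/a) ≤ a * (b/a - 1) := this
      _ = b - a := by field_simp
  nlinarith [mul_le_mul_of_nonneg_left h3 (sub_nonneg.2 hab)]

private lemma pow_le_fact_mul_exp (n : ℕ) :
    ((n:ℝ))^n ≤ (Nat.factorial n : ℝ) * Real.exp n := by
  have h1 : (n:ℝ)^n / (Nat.factorial n : ℝ) ≤ Real.exp n := by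
    calc (n:ℝ)^n / (Nat.factorial n : ℝ)
        ≤ ∑ i ∈ Finset.range (n+1), (n:ℝ)^i / (Nat.factorial i : ℝ) := by
          refine Finset.single_le_sum (f := fun i => (n:ℝ)^i / (Nat.factorial i : ℝ)) ?_
            (Finset.self_mem_range_succ n)
          intro i _; positivity
      _ ≤ Real.exp n := Real.sum_le_exp_of_nonneg (by positivity) _
  have hf : (0:ℝ) < (Nat.factorial n : ℝ) := by exact_mod_cast Nat.factorial_pos n
  calc ((n:ℝ))^n = (n:ℝ)^n / (Nat.factorial n : ℝ) * (Nat.factorial n : ℝ) := by field_simp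
    _ ≤ Real.exp n * (Nat.factorial n : ℝ) := by gcongr
    _ = _ := by ring

private lemma term_bound (γ L : ℝ) (hγ : 0 < γ) (hγ1 : γ ≤ 1) (hL : 0 < L) (k : ℕ)
    (hk : ((k:ℝ)+1) ≤ γ * L) :
    (2:ℝ)^(k+1) / (Nat.factorial k : ℝ) * (L+1)^k ≤
      γ * Real.exp γ * Real.exp (L * (γ * Real.log (2 * Real.exp 1 / γ))) := by
  have hL1 : (0:ℝ) < L + 1 := by linarith
  have hγL : 0 < γ * L := by positivity
  set c : ℝ := 2 * Real.exp 1 * (L+1) with hc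
  have hcpos : 0 < c := by positivity
  have hN : (0:ℝ) < (k:ℝ) + 1 := by positivity
  have hfk : (0:ℝ) < (Nat.factorial k : ℝ) := by exact_mod_cast Nat.factorial_pos k
  have hfk1 : (0:ℝ) < (Nat.factorial (k+1) : ℝ) := by exact_mod_cast Nat.factorial_pos (k+1)
  have step1 : (2:ℝ)^(k+1) / (Nat.factorial k : ℝ) * (L+1)^k =
      (((k:ℝ)+1)/(L+1)) * ((2*(L+1))^(k+1) / (Nat.factorial (k+1) : ℝ)) := by
    have hfs : (Nat.factorial (k+1) : ℝ) = ((k:ℝ)+1) * (Nat.factorial k : ℝ) := by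
      push_cast [Nat.factorial_succ]; ring
    rw [hfs, mul_pow]
    field_simp
    ring
  have step2 : (2*(L+1))^(k+1) / (Nat.factorial (k+1) : ℝ) ≤
      Real.exp (((k:ℝ)+1) * Real.log (c / ((k:ℝ)+1))) := by
    have hcast : ((k:ℝ)+1) = ((k+1 : ℕ) : ℝ) := by push_cast; ring
    have hrw : Real.exp (((k:ℝ)+1) * Real.log (c / ((k:ℝ)+1))) = (c/((k:ℝ)+1))^(k+1) := by
      rw [← Real.rpow_natCast (c/((k:ℝ)+1)) (k+1), Real.rpow_def_of_pos (by positivity)]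
      rw [hcast, mul_comm]
    rw [hrw]
    have hfact : ((k:ℝ)+1)^(k+1) ≤ (Nat.factorial (k+1) : ℝ) * Real.exp 1 ^ (k+1) := by
      have := pow_le_fact_mul_exp (k+1)
      rw [← Real.exp_one_rpow ((k+1:ℕ):ℝ), Real.rpow_natCast] at this
      calc ((k:ℝ)+1)^(k+1) = (((k+1:ℕ)):ℝ)^(k+1) := by rw [hcast]
        _ ≤ _ := this
    have hcd : (c/((k:ℝ)+1))^(k+1) = (2*(L+1))^(k+1) * Real.exp 1 ^ (k+1) / ((k:ℝ)+1)^(k+1) := by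
      rw [div_pow, hc]
      congr 1
      rw [show 2 * Real.exp 1 * (L+1) = 2*(L+1) * Real.exp 1 by ring, mul_pow]
    rw [hcd, div_le_div_iff₀ hfk1 (by positivity)]
    calc (2*(L+1))^(k+1) * ((k:ℝ)+1)^(k+1)
        ≤ (2*(L+1))^(k+1) * ((Nat.factorial (k+1) : ℝ) * Real.exp 1 ^ (k+1)) := by
          exact mul_le_mul_of_nonneg_left hfact (by positivity)
      _ = (2*(L+1))^(k+1) * Real.exp 1 ^ (k+1) * (Nat.factorial (k+1) : ℝ) := by ring
  have step3 : (((k:ℝ)+1)) * Real.log (c / ((k:ℝ)+1)) ≤ (γ*L) * Real.log (c / (γ*L)) := by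
    refine mono_aux _ _ _ hN hk ?_
    have h1 : γ * L ≤ 2*(L+1) := by nlinarith
    calc γ * L * Real.exp 1 ≤ 2*(L+1) * Real.exp 1 :=
          mul_le_mul_of_nonneg_right h1 (Real.exp_pos 1).le
      _ = c := by rw [hc]; ring
  have step4 : (γ*L) * Real.log (c / (γ*L)) ≤ L * (γ * Real.log (2 * Real.exp 1 / γ)) + γ := by
    have hsplit : c / (γ*L) = (2 * Real.exp 1 / γ) * ((L+1)/L) := by
      rw [hc]; field_simp
    have hlog : Real.log (c / (γ*L)) = Real.log (2 * Real.exp 1 / γ) + Real.log ((L+1)/L) := by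
      rw [hsplit, Real.log_mul (by positivity) (by positivity)]
    have h2 : Real.log ((L+1)/L) ≤ 1/L := by
      have := Real.log_le_sub_one_of_pos (show (0:ℝ) < (L+1)/L by positivity)
      have he : (L+1)/L - 1 = 1/L := by field_simp; ring
      linarith [he ▸ this]
    rw [hlog]
    have := mul_le_mul_of_nonneg_left h2 hγL.le
    have heq : γ * L * (1/L) = γ := by field_simp
    nlinarith
  have step5 : ((k:ℝ)+1)/(L+1) ≤ γ := by
    rw [div_le_iff₀ hL1]
    nlinarith
  calc (2:ℝ)^(k+1) / (Nat.factorial k : ℝ) * (L+1)^k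
      = (((k:ℝ)+1)/(L+1)) * ((2*(L+1))^(k+1) / (Nat.factorial (k+1) : ℝ)) := step1
    _ ≤ γ * Real.exp (((k:ℝ)+1) * Real.log (c / ((k:ℝ)+1))) := by
        exact mul_le_mul step5 step2 (by positivity) hγ.le
    _ ≤ γ * Real.exp ((γ*L) * Real.log (c / (γ*L))) := by
        exact mul_le_mul_of_nonneg_left (Real.exp_le_exp.2 step3) hγ.le
    _ ≤ γ * Real.exp (L * (γ * Real.log (2 * Real.exp 1 / γ)) + γ) := by
        exact mul_le_mul_of_nonneg_left (Real.exp_le_exp.2 step4) hγ.le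
    _ = γ * Real.exp γ * Real.exp (L * (γ * Real.log (2 * Real.exp 1 / γ))) := by
        rw [Real.exp_add]; ring

theorem stmt_19 (α₀ : ℝ) (hα₀ : α₀ ∈ Set.Ioo (0:ℝ) 1)
    (hroot : α₀ + α₀ * Real.log (2 / α₀) = 1)
    (γ : ℝ) (hγ : 0 < γ) (hγα : γ ≤ α₀) :
    let g : ℝ → ℝ := fun α => α + α * Real.log (2 / α) - 1
    let S : ℕ → ℝ := fun m =>
      ∑ μ ∈ Finset.Icc 1 ⌊γ * Real.log m⌋₊,
        (2 : ℝ) ^ μ / (Nat.factorial (μ - 1) : ℝ) * (Real.log m + 1) ^ (μ - 1) / m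
    (∀ m : ℕ, 2 ≤ m →
        S m ≤ γ ^ 2 * Real.exp γ * Real.log m * (m : ℝ) ^ (g γ)) ∧
      (γ < α₀ → g γ < 0 ∧ Tendsto S atTop (nhds 0)) := by
  intro g S
  obtain ⟨hα0, hα1⟩ := hα₀
  have hγ1 : γ ≤ 1 := hγα.trans hα1.le
  have hgexp : g γ = γ * Real.log (2 * Real.exp 1 / γ) - 1 := by
    have hx : Real.log (2 * Real.exp 1 / γ) = Real.log (2/γ) + 1 := by
      rw [show 2 * Real.exp 1 / γ = (2/γ) * Real.exp 1 by field_simp,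
        Real.log_mul (by positivity) (Real.exp_ne_zero 1), Real.log_exp]
    simp only [g]; rw [hx]; ring
  have hmain : ∀ m : ℕ, 2 ≤ m →
      S m ≤ γ ^ 2 * Real.exp γ * Real.log m * (m : ℝ) ^ (g γ) := by
    intro m hm
    have hm1 : (1:ℝ) < (m:ℝ) := by exact_mod_cast (by omega : 1 < m)
    have hm0 : (0:ℝ) < (m:ℝ) := by linarith
    set L : ℝ := Real.log m with hLdef
    have hL : 0 < L := Real.log_pos hm1
    have hMle : ((⌊γ*L⌋₊ : ℕ) : ℝ) ≤ γ * L := Nat.floor_le (by positivity)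
    have hrpos : (0:ℝ) < (m:ℝ) ^ (g γ) := Real.rpow_pos_of_pos hm0 _
    have hbound : ∀ μ ∈ Finset.Icc 1 ⌊γ*L⌋₊,
        (2:ℝ)^μ / (Nat.factorial (μ-1) : ℝ) * (L+1)^(μ-1) / m ≤
          γ * Real.exp γ * (m:ℝ)^(g γ) := by
      intro μ hμ
      rw [Finset.mem_Icc] at hμ
      obtain ⟨k, rfl⟩ : ∃ k, μ = k + 1 := ⟨μ - 1, by omega⟩
      simp only [Nat.add_sub_cancel]
      have hk : ((k:ℝ)+1) ≤ γ * L := by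
        have : ((k+1 : ℕ) : ℝ) ≤ ((⌊γ*L⌋₊ : ℕ) : ℝ) := by exact_mod_cast hμ.2
        push_cast at this; linarith
      have htb := term_bound γ L hγ hγ1 hL k hk
      have hrw : Real.exp (L * (γ * Real.log (2 * Real.exp 1 / γ))) / m = (m:ℝ) ^ (g γ) := by
        rw [hgexp, Real.rpow_sub hm0, Real.rpow_one, Real.rpow_def_of_pos hm0]
      calc (2:ℝ)^(k+1) / (Nat.factorial k : ℝ) * (L+1)^k / m
          ≤ γ * Real.exp γ * Real.exp (L * (γ * Real.log (2 * Real.exp 1 / γ))) / m := by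
            gcongr
        _ = γ * Real.exp γ * (Real.exp (L * (γ * Real.log (2 * Real.exp 1 / γ))) / m) := by
            ring
        _ = γ * Real.exp γ * (m:ℝ)^(g γ) := by rw [hrw]
    calc S m ≤ (Finset.Icc 1 ⌊γ*L⌋₊).card • (γ * Real.exp γ * (m:ℝ)^(g γ)) :=
          Finset.sum_le_card_nsmul _ _ _ hbound
      _ = ((⌊γ*L⌋₊ : ℕ) : ℝ) * (γ * Real.exp γ * (m:ℝ)^(g γ)) := by
          rw [Nat.card_Icc, nsmul_eq_mul]; norm_num
      _ ≤ (γ * L) * (γ * Real.exp γ * (m:ℝ)^(g γ)) := by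
          exact mul_le_mul_of_nonneg_right hMle (by positivity)
      _ = γ ^ 2 * Real.exp γ * L * (m:ℝ)^(g γ) := by ring
  refine ⟨hmain, fun hlt => ?_⟩
  have hg : g γ < 0 := by
    have key : Real.log (2/γ) = Real.log (2/α₀) + Real.log (α₀/γ) := by
      rw [← Real.log_mul (by positivity) (by positivity)]
      congr 1; field_simp
    have h2 : Real.log (α₀/γ) ≤ α₀/γ - 1 := Real.log_le_sub_one_of_pos (by positivity)
    have h3 : 0 < Real.log (2/α₀) := by
      apply Real.log_pos
      rw [lt_div_iff₀ hα0]; linarith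
    have h4 : γ * Real.log (α₀/γ) ≤ α₀ - γ := by
      have := mul_le_mul_of_nonneg_left h2 hγ.le
      calc γ * Real.log (α₀/γ) ≤ γ * (α₀/γ - 1) := this
        _ = α₀ - γ := by field_simp
    simp only [g]
    rw [key]
    nlinarith
  refine ⟨hg, ?_⟩
  have h0 : ∀ m : ℕ, 0 ≤ S m := by
    intro m
    apply Finset.sum_nonneg
    intro μ _
    have hlogn : (0:ℝ) ≤ Real.log m := Real.log_natCast_nonneg m
    have h1 : (0:ℝ) ≤ (Real.log m + 1) ^ (μ-1) := by positivity
    have h2 : (0:ℝ) ≤ (2:ℝ)^μ / (Nat.factorial (μ-1) : ℝ) := by positivity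
    exact div_nonneg (mul_nonneg h2 h1) (Nat.cast_nonneg m)
  have h1 : Tendsto (fun x : ℝ => Real.log x / x ^ (-(g γ))) atTop (nhds 0) :=
    (isLittleO_log_rpow_atTop (by linarith)).tendsto_div_nhds_zero
  have h2 : Tendsto (fun m : ℕ => Real.log m / (m:ℝ) ^ (-(g γ))) atTop (nhds 0) :=
    h1.comp tendsto_natCast_atTop_atTop
  have h3 : Tendsto (fun m : ℕ => γ ^ 2 * Real.exp γ * Real.log m * (m:ℝ) ^ (g γ))
      atTop (nhds 0) := by
    have := h2.const_mul (γ ^ 2 * Real.exp γ)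
    rw [mul_zero] at this
    refine this.congr fun m => ?_
    rw [Real.rpow_neg (Nat.cast_nonneg m), div_eq_mul_inv, inv_inv]
    ring
  exact squeeze_zero h0 (fun m => by
    rcases le_or_gt 2 m with h | h
    · exact hmain m h
    · interval_cases m
      · simp only [S]; norm_num
      · simp only [S]; norm_num) h3
end
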